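/- For any real symmetric n×n matrix A, (tr[sinh^2(A)])^{1/2} ≥ (1/√n)(tr[cosh(A)] − n). -/
import Mathlib


open Matrix

/-- Matrix function defined via eigendecomposition of a real symmetric matrix. -/
noncomputable def matFun {n : ℕ} (f : ℝ → ℝ) (A : Matrix (Fin n) (Fin n) ℝ)
    (hA : A.IsHermitian) : Matrix (Fin n) (Fin n) ℝ :=
  (hA.eigenvectorUnitary : Matrix (Fin n) (Fin n) ℝ) *
    Matrix.diagonal (fun i => f (hA.eigenvalues i)) *
      star (hA.eigenvectorUnitary : Matrix (Fin n) (Fin n) ℝ)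

lemma matFun_trace {n : ℕ} (f : ℝ → ℝ) (A : Matrix (Fin n) (Fin n) ℝ)
    (hA : A.IsHermitian) :
    (matFun f A hA).trace = ∑ i, f (hA.eigenvalues i) := by
  unfold matFun
  rw [Matrix.trace_mul_cycle]
  rw [show star (hA.eigenvectorUnitary : Matrix (Fin n) (Fin n) ℝ) *
      (hA.eigenvectorUnitary : Matrix (Fin n) (Fin n) ℝ) = 1 from hA.eigenvectorUnitary.prop.1]
  rw [one_mul, Matrix.trace_diagonal]

lemma matFun_sq {n : ℕ} (f : ℝ → ℝ) (A : Matrix (Fin n) (Fin n) ℝ)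
    (hA : A.IsHermitian) :
    matFun f A hA ^ 2 = matFun (fun x => f x ^ 2) A hA := by
  unfold matFun
  rw [sq]
  have h : star (hA.eigenvectorUnitary : Matrix (Fin n) (Fin n) ℝ) *
      (hA.eigenvectorUnitary : Matrix (Fin n) (Fin n) ℝ) = 1 := hA.eigenvectorUnitary.prop.1
  calc _ = (hA.eigenvectorUnitary : Matrix (Fin n) (Fin n) ℝ) *
        (Matrix.diagonal (fun i => f (hA.eigenvalues i)) *
          ((star (hA.eigenvectorUnitary : Matrix (Fin n) (Fin n) ℝ) *
            (hA.eigenvectorUnitary : Matrix (Fin n) (Fin n) ℝ)) *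
          Matrix.diagonal (fun i => f (hA.eigenvalues i)))) *
        star (hA.eigenvectorUnitary : Matrix (Fin n) (Fin n) ℝ) := by
        simp only [Matrix.mul_assoc]
    _ = _ := by
        rw [h, one_mul, Matrix.diagonal_mul_diagonal]
        simp [sq]

theorem sqrt_trace_sinh_sq_ge {n : ℕ} (A : Matrix (Fin n) (Fin n) ℝ) (hA : A.IsHermitian) :
    Real.sqrt ((matFun Real.sinh A hA ^ 2).trace) ≥
      (1 / Real.sqrt n) * ((matFun Real.cosh A hA).trace - n) := by
  rw [matFun_sq, matFun_trace, matFun_trace]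
  set lam := hA.eigenvalues
  have hb : ∀ i, (0:ℝ) ≤ Real.cosh (lam i) - 1 := fun i => by
    have := Real.one_le_cosh (lam i); linarith
  have hpt : ∀ i, (Real.cosh (lam i) - 1) ^ 2 ≤ Real.sinh (lam i) ^ 2 := by
    intro i
    have h1 := Real.one_le_cosh (lam i)
    have : Real.sinh (lam i) ^ 2 = Real.cosh (lam i) ^ 2 - 1 := Real.sinh_sq (lam i)
    nlinarith
  set S := ∑ i, (Real.cosh (lam i) - 1) with hS
  have hSnn : 0 ≤ S := Finset.sum_nonneg fun i _ => hb i
  have hsum : S ^ 2 ≤ n * ∑ i, Real.sinh (lam i) ^ 2 := by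
    calc S ^ 2 ≤ (Finset.univ.card : ℝ) * ∑ i, (Real.cosh (lam i) - 1) ^ 2 :=
          sq_sum_le_card_mul_sum_sq
      _ ≤ n * ∑ i, Real.sinh (lam i) ^ 2 := by
          simp only [Finset.card_univ, Fintype.card_fin]
          exact mul_le_mul_of_nonneg_left (Finset.sum_le_sum fun i _ => hpt i) (Nat.cast_nonneg n)
  have hrw : (∑ i, Real.cosh (lam i)) - n = S := by
    rw [hS, Finset.sum_sub_distrib]
    simp
  rw [ge_iff_le, hrw]
  rcases Nat.eq_zero_or_pos n with h0 | hn
  · subst h0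
    simp only [Nat.cast_zero, Real.sqrt_zero, div_zero, zero_mul]
    positivity
  · have hn' : (0:ℝ) < Real.sqrt n := Real.sqrt_pos.mpr (by exact_mod_cast hn)
    rw [div_mul_eq_mul_div, one_mul, div_le_iff₀ hn']
    have h1 : S ≤ Real.sqrt (n * ∑ i, Real.sinh (lam i) ^ 2) := by
      rw [← Real.sqrt_sq hSnn]
      exact Real.sqrt_le_sqrt hsum
    calc S ≤ Real.sqrt (n * ∑ i, Real.sinh (lam i) ^ 2) := h1
      _ = Real.sqrt (∑ i, Real.sinh (lam i) ^ 2) * Real.sqrt n := by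
          rw [Real.sqrt_mul (Nat.cast_nonneg n), mul_comm]
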